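/- Let X be a real normed space. There exists a map r from the collection of nonempty subsets of X with at most 2 elements to X such that r({a}) = a for every a ∈ X and ‖r(x) − r(y)‖ ≤ d_H(x, y) for all nonempty x, y ⊆ X with at most 2 elements; i.e., there exists a 1-Lipschitz retraction X(2) → X. (One such map sends each set to the average of its elements.) -/

import Mathlib

open Metric EMetric Set
open scoped Classical

private noncomputable def ravg {X : Type*} [NormedAddCommGroup X] [NormedSpace ℝ X]
    (x : Set X) : X :=
  if h : x.Finite then (h.toFinset.card : ℝ)⁻¹ • (∑ i ∈ h.toFinset, i) else 0

private lemma ravg_pair {X : Type*} [NormedAddCommGroup X] [NormedSpace ℝ X] (a b : X) :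
    ravg ({a, b} : Set X) = midpoint ℝ a b := by
  have hfin : (({a, b} : Set X)).Finite := (Set.finite_singleton b).insert a
  rw [ravg, dif_pos hfin]
  rcases eq_or_ne a b with rfl | hab
  · have h1 : hfin.toFinset = {a} := by ext z; simp [Set.Finite.mem_toFinset]
    simp [h1, midpoint_self]
  · have h1 : hfin.toFinset = {a, b} := by ext z; simp [Set.Finite.mem_toFinset]
    rw [h1]
    rw [Finset.card_insert_of_notMem (by simpa using hab), Finset.card_singleton,
      Finset.sum_insert (by simpa using hab), Finset.sum_singleton]
    rw [midpoint_eq_smul_add, invOf_eq_inv]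
    norm_num

private lemma mid_le {X : Type*} [NormedAddCommGroup X] [NormedSpace ℝ X] (a b c d : X) :
    ‖midpoint ℝ a b - midpoint ℝ c d‖ ≤ (dist a c + dist b d) / 2 := by
  rw [midpoint_eq_smul_add, midpoint_eq_smul_add, invOf_eq_inv, ← smul_sub]
  have h1 : a + b - (c + d) = (a - c) + (b - d) := by abel
  rw [h1, norm_smul]
  have h2 := norm_add_le (a - c) (b - d)
  rw [dist_eq_norm, dist_eq_norm]
  have h3 : ‖((2 : ℝ)⁻¹)‖ = 2⁻¹ := by
    rw [norm_inv, Real.norm_ofNat]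
  rw [h3]
  nlinarith [norm_nonneg (a - c + (b - d))]

private lemma min_le_of_infDist_le {X : Type*} [NormedAddCommGroup X]
    {a c d : X} {D : ℝ} (h : infDist a ({c, d} : Set X) ≤ D) :
    min (dist a c) (dist a d) ≤ D := by
  by_contra hlt
  push_neg at hlt
  obtain ⟨y, hy, hdy⟩ := (infDist_lt_iff ⟨c, by simp⟩).mp (lt_of_le_of_lt h hlt)
  rcases hy with rfl | rfl
  · exact absurd hdy (not_lt.mpr (min_le_left _ _))
  · exact absurd hdy (not_lt.mpr (min_le_right _ _))

private lemma key {X : Type*} [NormedAddCommGroup X] [NormedSpace ℝ X] (a b c d : X) :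
    ‖midpoint ℝ a b - midpoint ℝ c d‖ ≤ Metric.hausdorffDist ({a, b} : Set X) {c, d} := by
  set D := Metric.hausdorffDist ({a, b} : Set X) {c, d} with hD
  have hfin : hausdorffEdist ({a, b} : Set X) {c, d} ≠ ⊤ :=
    hausdorffEdist_ne_top_of_nonempty_of_bounded ⟨a, by simp⟩ ⟨c, by simp⟩
      (((Set.finite_singleton b).insert a).isBounded)
      (((Set.finite_singleton d).insert c).isBounded)
  have ha : min (dist a c) (dist a d) ≤ D :=
    min_le_of_infDist_le
      (infDist_le_hausdorffDist_of_mem (show a ∈ ({a, b} : Set X) by simp) hfin)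
  have hb : min (dist b c) (dist b d) ≤ D :=
    min_le_of_infDist_le
      (infDist_le_hausdorffDist_of_mem (show b ∈ ({a, b} : Set X) by simp) hfin)
  have hc : min (dist c a) (dist c b) ≤ D := by
    refine min_le_of_infDist_le ?_
    rw [hD, hausdorffDist_comm]
    exact infDist_le_hausdorffDist_of_mem (show c ∈ ({c, d} : Set X) by simp)
      (by rw [hausdorffEDist_comm]; exact hfin)
  have hd : min (dist d a) (dist d b) ≤ D := by
    refine min_le_of_infDist_le ?_
    rw [hD, hausdorffDist_comm]
    exact infDist_le_hausdorffDist_of_mem (show d ∈ ({c, d} : Set X) by simp)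
      (by rw [hausdorffEDist_comm]; exact hfin)
  rw [dist_comm c a, dist_comm c b] at hc
  rw [dist_comm d a, dist_comm d b] at hd
  have hmatch : (dist a c ≤ D ∧ dist b d ≤ D) ∨ (dist a d ≤ D ∧ dist b c ≤ D) := by
    rcases le_or_gt (dist a c) D with h1 | h1
    · rcases le_or_gt (dist b d) D with h2 | h2
      · exact Or.inl ⟨h1, h2⟩
      · refine Or.inr ⟨?_, ?_⟩
        · rcases min_le_iff.mp hd with h | h
          · exact h
          · linarith
        · rcases min_le_iff.mp hb with h | h
          · exact h
          · linarith
    · refine Or.inr ⟨?_, ?_⟩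
      · rcases min_le_iff.mp ha with h | h
        · linarith
        · exact h
      · rcases min_le_iff.mp hc with h | h
        · linarith
        · exact h
  rcases hmatch with ⟨h1, h2⟩ | ⟨h1, h2⟩
  · calc ‖midpoint ℝ a b - midpoint ℝ c d‖ ≤ (dist a c + dist b d) / 2 := mid_le a b c d
      _ ≤ D := by linarith
  · rw [midpoint_comm c d]
    calc ‖midpoint ℝ a b - midpoint ℝ d c‖ ≤ (dist a d + dist b c) / 2 := mid_le a b d c
      _ ≤ D := by linarith

private lemma exists_pair {X : Type*} (x : Set X) (hne : x.Nonempty) (hc : x.encard ≤ 2) :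
    ∃ a b, x = {a, b} := by
  rcases lt_or_eq_of_le hc with h | h
  · have h1 : x.encard ≤ 1 := Order.le_of_lt_succ (by exact_mod_cast h)
    rcases Set.encard_le_one_iff_eq.mp h1 with rfl | ⟨a, rfl⟩
    · exact absurd hne (by simp)
    · exact ⟨a, a, by simp⟩
  · obtain ⟨a, b, -, rfl⟩ := Set.encard_eq_two.mp h
    exact ⟨a, b, rfl⟩

/-- There exists a `1`-Lipschitz retraction `X(2) → X` for any normed space `X`. -/
theorem stmt_4 {X : Type*} [NormedAddCommGroup X] [NormedSpace ℝ X] :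
    ∃ r : Set X → X,
      (∀ a : X, r {a} = a) ∧
      (∀ x y : Set X, x.Nonempty → x.encard ≤ 2 → y.Nonempty → y.encard ≤ 2 →
        ‖r x - r y‖ ≤ Metric.hausdorffDist x y) := by
  refine ⟨ravg, fun a => ?_, fun x y hx hx2 hy hy2 => ?_⟩
  · have h : ({a} : Set X) = {a, a} := by simp
    rw [h, ravg_pair, midpoint_self]
  · obtain ⟨a, b, rfl⟩ := exists_pair x hx hx2
    obtain ⟨c, d, rfl⟩ := exists_pair y hy hy2
    rw [ravg_pair, ravg_pair]
    exact key a b c d
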